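/- Let M be a d×n matrix over K of rank d and define p(ω) = val(det M_ω) ∈ ℤ ∪ {∞} for each d-subset ω of {1,…,n}, where M_ω is the d×d submatrix with columns indexed by ω. For u ∈ (ℤ ∪ {∞})ⁿ not identically ∞, the following are equivalent: (i) for every (d+1)-subset τ of {1,…,n}, there exist distinct i, j ∈ τ such that p(τ∖{i}) + u_i = p(τ∖{j}) + u_j = min_{k ∈ τ} (p(τ∖{k}) + u_k), the arithmetic taken in ℤ ∪ {∞}; (ii) there exists a nonzero vector v in the row space of M over K with val(v_i) = u_i for all i. (The lattice points of the tropical linear space L_p are precisely the valuations of the vectors in the row space of M.) -/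

import Mathlib

/- Speyer–Sturmfels: for a d×n matrix M over K = ℂ((z)) of rank d, with valuated matroid
   p(ω) = val(det M_ω), a point u ∈ (ℤ ∪ {∞})ⁿ (not identically ∞) lies in the tropical
   linear space L_p iff u = val(v) for some nonzero vector v in the row space of M. -/

noncomputable section
set_option synthInstance.maxHeartbeats 1000000
set_option maxHeartbeats 1000000

abbrev K := LaurentSeries ℂ

open Classical in
def zval (c : K) : WithTop ℤ := if c = 0 then ⊤ else ((c.order : ℤ) : WithTop ℤ)

/-- The minimum of `f` over the finite set `s` is attained at least twice. -/
def MinAttainedTwice {ι α : Type*} [LinearOrder α] (s : Finset ι) (f : ι → α) : Prop :=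
  ∃ i ∈ s, ∃ j ∈ s, i ≠ j ∧ f i = f j ∧ ∀ k ∈ s, f i ≤ f k

/-- The valuated matroid of the matrix `M`: `p(ω) = val (det M_ω)` for `d`-subsets `ω`
(and `∞` for subsets of the wrong cardinality). -/
def pval {d n : ℕ} (M : Matrix (Fin d) (Fin n) K) (ω : Finset (Fin n)) : WithTop ℤ :=
  if h : ω.card = d then
    zval (M.submatrix id (fun k => ((ω.orderIsoOfFin h) k : Fin n))).det
  else ⊤

/-! ### Auxiliary facts about `zval` -/

theorem zval_eq_orderTop (c : K) : zval c = c.orderTop := by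
  classical
  unfold zval
  split_ifs with h
  · simp [h]
  · rw [HahnSeries.order_eq_orderTop_of_ne_zero h]

theorem zval_eq_top_iff {c : K} : zval c = ⊤ ↔ c = 0 := by
  rw [zval_eq_orderTop, HahnSeries.orderTop_eq_top]

theorem zval_mul (a b : K) : zval (a * b) = zval a + zval b := by
  by_cases ha : a = 0
  · simp [ha, zval]
  by_cases hb : b = 0
  · simp [hb, zval]
  have hab : a * b ≠ 0 := mul_ne_zero ha hb
  simp only [zval, if_neg ha, if_neg hb, if_neg hab]
  rw [HahnSeries.order_mul ha hb]
  push_cast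
  rfl

theorem zval_single (m : ℤ) (c : ℂ) (h : c ≠ 0) : zval (HahnSeries.single m c) = m := by
  rw [zval_eq_orderTop, HahnSeries.orderTop_single h]

theorem le_zval_add {m : WithTop ℤ} {a b : K} (ha : m ≤ zval a) (hb : m ≤ zval b) :
    m ≤ zval (a + b) := by
  rw [zval_eq_orderTop] at *
  exact le_trans (le_min ha hb) HahnSeries.min_orderTop_le_orderTop_add

theorem le_zval_sum {ι : Type*} {m : WithTop ℤ} (s : Finset ι) (f : ι → K)
    (h : ∀ k ∈ s, m ≤ zval (f k)) : m ≤ zval (∑ k ∈ s, f k) := by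
  classical
  induction s using Finset.induction with
  | empty => simp [zval]
  | insert _ _ hnot ih =>
      rw [Finset.sum_insert hnot]
      exact le_zval_add (h _ (Finset.mem_insert_self _ _))
        (ih fun k hk => h k (Finset.mem_insert_of_mem hk))

theorem coeff_eq_zero_of_lt_zval {x : K} {m : ℤ} (h : (m : WithTop ℤ) < zval x) :
    x.coeff m = 0 := by
  rw [zval_eq_orderTop] at h
  exact HahnSeries.coeff_eq_zero_of_lt_orderTop h

theorem zval_eq_of_coeff_ne_zero {x : K} {m : ℤ} (h1 : (m : WithTop ℤ) ≤ zval x)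
    (h2 : x.coeff m ≠ 0) : zval x = m := by
  rw [zval_eq_orderTop] at *
  exact le_antisymm (HahnSeries.orderTop_le_of_coeff_ne_zero h2) h1

theorem zval_neg (x : K) : zval (-x) = zval x := by
  rw [zval_eq_orderTop, zval_eq_orderTop, HahnSeries.orderTop_neg]

theorem zval_neg_one_pow_mul (e : ℕ) (x : K) : zval ((-1 : K) ^ e * x) = zval x := by
  rcases neg_one_pow_eq_or K e with he | he
  · rw [he, one_mul]
  · rw [he, neg_one_mul, zval_neg]

theorem coeff_neg_one_pow_mul (e : ℕ) (x : K) (m : ℤ) :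
    ((-1 : K) ^ e * x).coeff m = (-1 : ℂ) ^ e * x.coeff m := by
  rcases Nat.even_or_odd e with he | he
  · rw [he.neg_one_pow (α := K), he.neg_one_pow (α := ℂ), one_mul, one_mul]
  · rw [he.neg_one_pow (α := K), he.neg_one_pow (α := ℂ), neg_one_mul, neg_one_mul,
      HahnSeries.coeff_neg]

theorem coeff_sum {ι : Type*} (s : Finset ι) (f : ι → K) (m : ℤ) :
    (∑ k ∈ s, f k).coeff m = ∑ k ∈ s, (f k).coeff m := by
  classical
  induction s using Finset.induction with
  | empty => simp
  | insert _ _ hnot ih => simp [Finset.sum_insert hnot, HahnSeries.coeff_add, ih]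

theorem zval_coeff_ne_zero {x : K} {m : ℤ} (h : zval x = (m : WithTop ℤ)) :
    x.coeff m ≠ 0 := by
  rw [zval_eq_orderTop] at h
  exact HahnSeries.coeff_orderTop_ne h

/-- If a finite sum of Laurent series vanishes (and there are at least two terms),
the minimum of the valuations is attained at least twice. -/
theorem minTwice_of_sum_eq_zero {ι : Type*} [DecidableEq ι] (s : Finset ι) (hs : 1 < s.card)
    (x : ι → K) (hsum : ∑ k ∈ s, x k = 0) :
    MinAttainedTwice s (fun k => zval (x k)) := by
  obtain ⟨k₁, hk₁s, hk₁min⟩ := s.exists_min_image (fun k => zval (x k))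
    (Finset.card_pos.mp (by omega))
  rcases eq_or_ne (zval (x k₁)) ⊤ with htop | hne
  · obtain ⟨a, ha, b, hb, hab⟩ := Finset.one_lt_card.mp hs
    have hall : ∀ k ∈ s, zval (x k) = ⊤ := fun k hk =>
      le_antisymm le_top (htop ▸ hk₁min k hk)
    refine ⟨a, ha, b, hb, hab, ?_, ?_⟩
    · show zval (x a) = zval (x b)
      rw [hall a ha, hall b hb]
    · intro k hk
      show zval (x a) ≤ zval (x k)
      rw [hall a ha, hall k hk]
  · obtain ⟨m, hm⟩ := WithTop.ne_top_iff_exists.mp hne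
    by_cases h2 : ∃ k₂ ∈ s, k₂ ≠ k₁ ∧ zval (x k₂) = zval (x k₁)
    · obtain ⟨k₂, hk₂s, hk₂ne, hk₂⟩ := h2
      exact ⟨k₁, hk₁s, k₂, hk₂s, hk₂ne.symm, hk₂.symm, hk₁min⟩
    · exfalso
      push_neg at h2
      have hcoeff : ∀ k ∈ s, k ≠ k₁ → (x k).coeff m = 0 := by
        intro k hk hkne
        apply coeff_eq_zero_of_lt_zval
        exact lt_of_le_of_ne (hm ▸ hk₁min k hk) (fun h => h2 k hk hkne (hm ▸ h.symm))
      have h0 : (0 : K).coeff m = 0 := by simp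
      rw [← hsum, coeff_sum] at h0
      rw [← Finset.add_sum_erase s _ hk₁s] at h0
      rw [Finset.sum_eq_zero (fun k hk => hcoeff k (Finset.mem_of_mem_erase hk)
        (Finset.ne_of_mem_erase hk)), add_zero] at h0
      exact zval_coeff_ne_zero hm.symm h0

/-! ### Maximal minors -/

open Classical in
/-- The determinant of the square submatrix of `M` on column set `σ` (`0` if wrong size). -/
def dsub {d n : ℕ} (M : Matrix (Fin d) (Fin n) K) (σ : Finset (Fin n)) : K :=
  if h : σ.card = d then (M.submatrix id (fun k => σ.orderEmbOfFin h k)).det else 0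

theorem pval_eq_zval_dsub {d n : ℕ} (M : Matrix (Fin d) (Fin n) K) (σ : Finset (Fin n)) :
    pval M σ = zval (dsub M σ) := by
  classical
  unfold pval dsub
  split_ifs with h
  · congr 1
  · simp [zval]

theorem dsub_eq {d n : ℕ} (M : Matrix (Fin d) (Fin n) K) (σ : Finset (Fin n))
    (h : σ.card = d) :
    dsub M σ = (M.submatrix id (fun k => σ.orderEmbOfFin h k)).det := by
  classical
  unfold dsub
  rw [dif_pos h]

theorem card_erase_of_card_succ {n d : ℕ} {τ : Finset (Fin n)} (hτ : τ.card = d + 1)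
    {i : Fin n} (hi : i ∈ τ) : (τ.erase i).card = d := by
  rw [Finset.card_erase_of_mem hi, hτ]; rfl

/-- Enumeration of `τ.erase (e k)` equals `e ∘ succAbove k`. -/
theorem orderEmbOfFin_erase {n d : ℕ} (τ : Finset (Fin n)) (hτ : τ.card = d + 1)
    (k : Fin (d + 1)) (j : Fin d) :
    (τ.erase (τ.orderEmbOfFin hτ k)).orderEmbOfFin
        (card_erase_of_card_succ hτ (τ.orderEmbOfFin_mem hτ k)) j
      = τ.orderEmbOfFin hτ (k.succAbove j) := by
  classical
  set e := τ.orderEmbOfFin hτ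
  have hmono : StrictMono (fun j : Fin d => e (k.succAbove j)) :=
    e.strictMono.comp (Fin.strictMono_succAbove k)
  have hmem : ∀ j, e (k.succAbove j) ∈ τ.erase (e k) := by
    intro j
    refine Finset.mem_erase.mpr ⟨?_, τ.orderEmbOfFin_mem hτ _⟩
    intro h
    exact Fin.succAbove_ne k j (e.injective h)
  have := Finset.orderEmbOfFin_unique
    (card_erase_of_card_succ hτ (τ.orderEmbOfFin_mem hτ k)) hmem hmono
  exact (congrFun this j).symm

/-- The circuit identity: for `v` in the row space of `M` and a `(d+1)`-subset `τ`, the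
alternating sum of `v` against the maximal minors of `M` on `τ` vanishes. -/
theorem circuit_identity {d n : ℕ} (M : Matrix (Fin d) (Fin n) K) (τ : Finset (Fin n))
    (hτ : τ.card = d + 1) (y : Fin d → K) :
    ∑ k : Fin (d + 1), (-1 : K) ^ (d + (k : ℕ)) * Matrix.vecMul y M (τ.orderEmbOfFin hτ k)
      * dsub M (τ.erase (τ.orderEmbOfFin hτ k)) = 0 := by
  classical
  set e := τ.orderEmbOfFin hτ with he
  set B : Matrix (Fin (d + 1)) (Fin (d + 1)) K :=
    Matrix.of (Fin.snoc (fun r k => M r (e k)) (fun k => Matrix.vecMul y M (e k))) with hB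
  have hdet : B.det = 0 := by
    by_contra h
    have hw : Matrix.vecMul (Fin.snoc y (-1 : K)) B = 0 := by
      funext k
      simp only [Matrix.vecMul, dotProduct]
      rw [Fin.sum_univ_castSucc]
      simp only [hB, Fin.snoc_castSucc, Fin.snoc_last, Matrix.of_apply]
      have : Matrix.vecMul y M (e k) = ∑ r : Fin d, y r * M r (e k) := by
        simp [Matrix.vecMul, dotProduct]
      rw [this]
      ring_nf
      simp [Finset.sum_sub_distrib]
    have := Matrix.eq_zero_of_vecMul_eq_zero h hw
    have h1 := congrFun this (Fin.last d)
    simp [Fin.snoc_last] at h1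
  have hexp := Matrix.det_succ_row B (Fin.last d)
  rw [hdet] at hexp
  have : ∀ k : Fin (d + 1),
      (-1 : K) ^ ((Fin.last d : ℕ) + (k : ℕ)) * B (Fin.last d) k
        * (B.submatrix (Fin.last d).succAbove k.succAbove).det
      = (-1 : K) ^ (d + (k : ℕ)) * Matrix.vecMul y M (e k) * dsub M (τ.erase (e k)) := by
    intro k
    have hBlast : B (Fin.last d) k = Matrix.vecMul y M (e k) := by
      simp [hB, Fin.snoc_last]
    have hsub : (B.submatrix (Fin.last d).succAbove k.succAbove).det
        = dsub M (τ.erase (e k)) := by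
      rw [dsub_eq M _ (card_erase_of_card_succ hτ (τ.orderEmbOfFin_mem hτ k))]
      congr 1
      ext j j'
      rw [Matrix.submatrix_apply, Matrix.submatrix_apply, Fin.succAbove_last]
      simp only [hB, Matrix.of_apply, Fin.snoc_castSucc, id_eq]
      rw [orderEmbOfFin_erase τ hτ k j']
    rw [hBlast, hsub, Fin.val_last]
  rw [Finset.sum_congr rfl (fun k _ => this k)] at hexp
  exact hexp.symm

open Matrix in
/-- A matrix of full row rank has an invertible maximal square submatrix. -/
theorem exists_basis_finset {d n : ℕ} (M : Matrix (Fin d) (Fin n) K) (hrank : M.rank = d) :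
    ∃ ω : Finset (Fin n), ω.card = d ∧ dsub M ω ≠ 0 := by
  classical
  have hspan : Submodule.span K (Set.range Mᵀ) = ⊤ := by
    have h1 : LinearMap.range M.mulVecLin = Submodule.span K (Set.range Mᵀ) :=
      M.range_mulVecLin
    have h2 : Module.finrank K (LinearMap.range M.mulVecLin) = d := hrank
    apply Submodule.eq_top_of_finrank_eq
    rw [← h1, h2, Module.finrank_fintype_fun_eq_card, Fintype.card_fin]
  obtain ⟨b, hbsub, hbspan, hbind⟩ := exists_linearIndependent K (Set.range Mᵀ)
  rw [hspan] at hbspan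
  have hbfin : b.Finite := hbind.setFinite
  have : Fintype b := hbfin.fintype
  have hbbasis : Module.Basis b K (Fin d → K) := Module.Basis.mk hbind (by rw [Subtype.range_coe, hbspan])
  have hcardb : Fintype.card b = d := by
    rw [← Module.finrank_eq_card_basis hbbasis, Module.finrank_fintype_fun_eq_card,
      Fintype.card_fin]
  have hchoice : ∀ x : b, ∃ j : Fin n, Mᵀ j = (x : Fin d → K) := fun x => hbsub x.2
  choose φ hφ using hchoice
  have hφinj : Function.Injective φ := by
    intro x y hxy
    have : (x : Fin d → K) = y := by rw [← hφ x, ← hφ y, hxy]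
    exact Subtype.ext this
  set ω : Finset (Fin n) := Finset.image φ Finset.univ with hω
  have hcard : ω.card = d := by
    rw [hω, Finset.card_image_of_injective _ hφinj, Finset.card_univ, hcardb]
  refine ⟨ω, hcard, ?_⟩
  rw [dsub]
  rw [dif_pos hcard]
  set A := M.submatrix id (fun k => ω.orderEmbOfFin hcard k) with hA
  have hcols : LinearIndependent K (fun j => Aᵀ j) := by
    have hg : ∀ j : Fin d, Mᵀ (ω.orderEmbOfFin hcard j) ∈ b := by
      intro j
      have h0 : (ω.orderEmbOfFin hcard) j ∈ Finset.image φ Finset.univ := by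
        rw [← hω]; exact ω.orderEmbOfFin_mem hcard j
      obtain ⟨x, _, hx⟩ := Finset.mem_image.mp h0
      rw [← hx, hφ x]
      exact x.2
    set g : Fin d → b := fun j => ⟨Mᵀ (ω.orderEmbOfFin hcard j), hg j⟩ with hgdef
    have hginj : Function.Injective g := by
      intro j j' hjj'
      have h1 : Mᵀ (ω.orderEmbOfFin hcard j) = Mᵀ (ω.orderEmbOfFin hcard j') :=
        congrArg Subtype.val hjj'
      have hex : ∀ j₀ : Fin d, ∃ x : b, φ x = ω.orderEmbOfFin hcard j₀ := by
        intro j₀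
        have h0 : (ω.orderEmbOfFin hcard) j₀ ∈ Finset.image φ Finset.univ := by
          rw [← hω]; exact ω.orderEmbOfFin_mem hcard j₀
        obtain ⟨x, _, hx⟩ := Finset.mem_image.mp h0
        exact ⟨x, hx⟩
      obtain ⟨x, hx⟩ := hex j
      obtain ⟨x', hx'⟩ := hex j'
      have : x = x' := by
        apply Subtype.ext
        rw [← hφ x, ← hφ x', hx, hx', h1]
      have : ω.orderEmbOfFin hcard j = ω.orderEmbOfFin hcard j' := by
        rw [← hx, ← hx', this]
      exact (ω.orderEmbOfFin hcard).injective this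
    have : (fun j => Aᵀ j) = (fun x : b => (x : Fin d → K)) ∘ g := by
      funext j
      simp only [Function.comp, hgdef]
      ext r
      simp [hA, Matrix.transpose_apply, Matrix.submatrix_apply]
    rw [this]
    exact hbind.comp g hginj
  have := Matrix.linearIndependent_cols_iff_isUnit.mp hcols
  have hdet := (Matrix.isUnit_iff_isUnit_det A).mp this
  exact IsUnit.ne_zero hdet

/-- Over ℂ, finitely many nonzero linear forms admit a common non-vanishing point. -/
theorem exists_generic_point {ι : Type*} [Fintype ι] (L : Finset ((ι → ℂ) →ₗ[ℂ] ℂ))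
    (hL : ∀ ℓ ∈ L, ℓ ≠ 0) : ∃ c : ι → ℂ, ∀ ℓ ∈ L, ℓ c ≠ 0 := by
  classical
  induction L using Finset.induction with
  | empty => exact ⟨0, by simp⟩
  | @insert ℓ₀ L hℓ₀L ih =>
      obtain ⟨c, hc⟩ := ih fun ℓ hℓ => hL ℓ (Finset.mem_insert_of_mem hℓ)
      have hℓ₀ : ℓ₀ ≠ 0 := hL ℓ₀ (Finset.mem_insert_self _ _)
      obtain ⟨b, hb⟩ : ∃ b, ℓ₀ b ≠ 0 := by
        by_contra h
        push_neg at h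
        exact hℓ₀ (LinearMap.ext fun x => by simp [h x])
      set φ : Polynomial ℂ :=
        ∏ ℓ ∈ insert ℓ₀ L, (Polynomial.C (ℓ c) + Polynomial.X * Polynomial.C (ℓ b)) with hφ
      have hφ0 : φ ≠ 0 := by
        rw [hφ]
        apply Finset.prod_ne_zero_iff.mpr
        intro ℓ hℓ
        rcases Finset.mem_insert.mp hℓ with rfl | hℓ
        · intro h
          have := congrArg (fun q => Polynomial.coeff q 1) h
          simp [Polynomial.coeff_C] at this
          exact hb this
        · intro h
          have := congrArg (fun q => Polynomial.coeff q 0) h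
          simp [Polynomial.coeff_C] at this
          exact hc ℓ hℓ this
      obtain ⟨t, ht⟩ : ∃ t : ℂ, ¬ φ.IsRoot t := by
        have := (Polynomial.finite_setOf_isRoot hφ0).infinite_compl
        obtain ⟨t, ht⟩ := this.nonempty
        exact ⟨t, ht⟩
      refine ⟨c + t • b, fun ℓ hℓ => ?_⟩
      have heval : φ.eval t = ∏ ℓ ∈ insert ℓ₀ L, ℓ (c + t • b) := by
        rw [hφ, Polynomial.eval_prod]
        refine Finset.prod_congr rfl fun ℓ _ => ?_
        rw [Polynomial.eval_add, Polynomial.eval_C, Polynomial.eval_mul, Polynomial.eval_X,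
          Polynomial.eval_C, map_add, map_smul, smul_eq_mul, mul_comm]
      have : ∏ ℓ ∈ insert ℓ₀ L, ℓ (c + t • b) ≠ 0 := by rw [← heval]; exact ht
      exact Finset.prod_ne_zero_iff.mp this ℓ hℓ

theorem vecMul_eq_sum_smul {d n : ℕ} (y : Fin d → K) (M : Matrix (Fin d) (Fin n) K) :
    Matrix.vecMul y M = ∑ r : Fin d, y r • (M r) := by
  funext i
  simp [Matrix.vecMul, dotProduct, Finset.sum_apply]


theorem zval_of_ne {x : K} (h : x ≠ 0) : zval x = ((x.order : ℤ) : WithTop ℤ) := by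
  unfold zval
  rw [if_neg h]

theorem lattice_points_of_tropicalized_row_space {d n : ℕ}
    (M : Matrix (Fin d) (Fin n) K) (hrank : M.rank = d)
    (u : Fin n → WithTop ℤ) (hu : ¬ ∀ i, u i = ⊤) :
    (∀ τ : Finset (Fin n), τ.card = d + 1 →
        MinAttainedTwice τ (fun i => pval M (τ.erase i) + u i)) ↔
    (∃ v : Fin n → K, v ≠ 0 ∧
        v ∈ Submodule.span K (Set.range fun i : Fin d => (M i : Fin n → K)) ∧
        ∀ i : Fin n, zval (v i) = u i) := by
  classical
  constructor
  · -- hard direction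
    intro h1
    by_cases hd0 : d = 0
    · exfalso
      obtain ⟨i₀, hi₀⟩ := not_forall.mp hu
      have hτ : ({i₀} : Finset (Fin n)).card = d + 1 := by
        rw [hd0, Finset.card_singleton]
      obtain ⟨a, ha, b, hb, hab, -, -⟩ := h1 {i₀} hτ
      rw [Finset.mem_singleton] at ha hb
      exact hab (ha.trans hb.symm)
    obtain ⟨i₀, hi₀⟩ := not_forall.mp hu
    set F : Finset (Fin n) := Finset.univ.filter (fun i => u i = ⊤) with hF
    have hmemF : ∀ i, i ∈ F ↔ u i = ⊤ := fun i => by simp [hF]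
    set uZ : Fin n → ℤ := fun j => WithTop.untopD 0 (u j) with huZ
    have huNF : ∀ j, j ∉ F → u j = ((uZ j : ℤ) : WithTop ℤ) := by
      intro j hj
      obtain ⟨m, hm⟩ := WithTop.ne_top_iff_exists.mp (fun h => hj ((hmemF j).mpr h))
      simp only [huZ]
      rw [← hm, WithTop.untopD_coe]
    set B : Finset (Finset (Fin n)) :=
      Finset.univ.filter (fun ω => ω.card = d ∧ dsub M ω ≠ 0) with hB
    have hmemB : ∀ ω, ω ∈ B ↔ ω.card = d ∧ dsub M ω ≠ 0 := fun ω => by simp [hB]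
    obtain ⟨ω₀, hω₀c, hω₀d⟩ := exists_basis_finset M hrank
    obtain ⟨ω₁, hω₁B, hmax1⟩ := B.exists_max_image (fun ω => (ω ∩ F).card)
      ⟨ω₀, (hmemB ω₀).mpr ⟨hω₀c, hω₀d⟩⟩
    set g : Finset (Fin n) → ℤ := fun ω => (dsub M ω).order - ∑ j ∈ ω \ F, uZ j with hg
    obtain ⟨ω, hωB2, hgmin⟩ :=
      (B.filter (fun ω' => (ω₁ ∩ F).card ≤ (ω' ∩ F).card)).exists_min_image g
        ⟨ω₁, Finset.mem_filter.mpr ⟨hω₁B, le_refl _⟩⟩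
    obtain ⟨hωB, hωF1⟩ := Finset.mem_filter.mp hωB2
    obtain ⟨hcard, hdet⟩ := (hmemB ω).mp hωB
    have hFmax : ∀ ω' ∈ B, (ω' ∩ F).card ≤ (ω ∩ F).card :=
      fun ω' h => (hmax1 ω' h).trans hωF1
    have hgm : ∀ ω' ∈ B, (ω ∩ F).card ≤ (ω' ∩ F).card → g ω ≤ g ω' := by
      intro ω' h hle
      exact hgmin ω' (Finset.mem_filter.mpr ⟨h, le_trans hωF1 hle⟩)
    set P : ℤ := (dsub M ω).order with hP
    have hpω : pval M ω = ((P : ℤ) : WithTop ℤ) := by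
      rw [pval_eq_zval_dsub, zval_of_ne hdet]
    -- ω contains an element outside F
    have hωS : ∃ j ∈ ω, j ∉ F := by
      by_contra hall
      push_neg at hall
      have hi₀ω : i₀ ∉ ω := fun h => hi₀ ((hmemF i₀).mp (hall i₀ h))
      have hτc : (insert i₀ ω).card = d + 1 := by
        rw [Finset.card_insert_of_notMem hi₀ω, hcard]
      obtain ⟨a, haτ, b, hbτ, hab, heq, hmin⟩ := h1 _ hτc
      simp only [] at heq hmin
      have hfi₀ : pval M ((insert i₀ ω).erase i₀) + u i₀ ≠ ⊤ := by
        rw [Finset.erase_insert hi₀ω, hpω]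
        obtain ⟨m, hm⟩ := WithTop.ne_top_iff_exists.mp hi₀
        rw [← hm, ← WithTop.coe_add]
        exact WithTop.coe_ne_top
      have hftop : ∀ j ∈ ω, pval M ((insert i₀ ω).erase j) + u j = ⊤ := by
        intro j hj
        rw [(hmemF j).mp (hall j hj), add_top]
      have hresolve : ∀ x ∈ insert i₀ ω,
          pval M ((insert i₀ ω).erase x) + u x ≠ ⊤ → x = i₀ := by
        intro x hx hne
        rcases Finset.mem_insert.mp hx with h | h
        · exact h
        · exact absurd (hftop x h) hne
      have hane : pval M ((insert i₀ ω).erase a) + u a ≠ ⊤ := by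
        intro h
        exact hfi₀ (top_le_iff.mp (h ▸ hmin i₀ (Finset.mem_insert_self _ _)))
      have hbne : pval M ((insert i₀ ω).erase b) + u b ≠ ⊤ := by
        intro h
        rw [heq] at hane
        exact hane h
      exact hab ((hresolve a haτ hane).trans (hresolve b hbτ hbne).symm)
    -- the key exchange lower bound
    have hkey : ∀ i, i ∉ ω → i ∉ F → ∀ j ∈ ω,
        (((P + uZ i : ℤ)) : WithTop ℤ) ≤ pval M ((insert i ω).erase j) + u j := by
      intro i hiω hiF j hjω
      by_cases hjF : j ∈ F
      · rw [(hmemF j).mp hjF, add_top]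
        exact le_top
      by_cases hdz : dsub M ((insert i ω).erase j) = 0
      · rw [pval_eq_zval_dsub, hdz, zval_eq_top_iff.mpr rfl, top_add]
        exact le_top
      · have hij : i ≠ j := fun h => hiω (h ▸ hjω)
        have herase : (insert i ω).erase j = insert i (ω.erase j) :=
          Finset.erase_insert_of_ne hij
        have hjτ : j ∈ insert i ω := Finset.mem_insert_of_mem hjω
        have hω'c : ((insert i ω).erase j).card = d := by
          rw [Finset.card_erase_of_mem hjτ, Finset.card_insert_of_notMem hiω, hcard]
          omega
        have hω'B : (insert i ω).erase j ∈ B := (hmemB _).mpr ⟨hω'c, hdz⟩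
        have hjωF : j ∉ ω ∩ F := fun h => hjF (Finset.mem_of_mem_inter_right h)
        have hω'F : ((insert i ω).erase j) ∩ F = ω ∩ F := by
          rw [herase, Finset.insert_inter_of_notMem hiF, Finset.erase_inter,
            Finset.erase_eq_of_notMem hjωF]
        have hgle := hgm _ hω'B (le_of_eq (by rw [hω'F]))
        have hsd : ((insert i ω).erase j) \ F = insert i ((ω \ F).erase j) := by
          rw [herase, Finset.insert_sdiff_of_notMem _ hiF, Finset.erase_sdiff_comm]
        have hsum' : ∑ x ∈ ((insert i ω).erase j) \ F, uZ x
            = uZ i + (∑ x ∈ ω \ F, uZ x - uZ j) := by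
          rw [hsd, Finset.sum_insert (fun h => hiω (Finset.mem_sdiff.mp
            (Finset.mem_of_mem_erase h)).1),
            Finset.sum_erase_eq_sub (Finset.mem_sdiff.mpr ⟨hjω, hjF⟩)]
        have h1 : P - ∑ x ∈ ω \ F, uZ x ≤ (dsub M ((insert i ω).erase j)).order
            - ∑ x ∈ ((insert i ω).erase j) \ F, uZ x := hgle
        rw [hsum'] at h1
        rw [pval_eq_zval_dsub, zval_of_ne hdz, huNF j hjF, ← WithTop.coe_add,
          WithTop.coe_le_coe]
        omega
    -- the construction
    set emb := ω.orderEmbOfFin hcard with hembd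
    set A : Matrix (Fin d) (Fin d) K := M.submatrix id (fun r => emb r) with hA
    have hAdet : A.det ≠ 0 := by
      rw [dsub_eq M ω hcard] at hdet
      exact hdet
    set payload : (Fin n → ℂ) → Fin n → K :=
      fun c j => if u j = ⊤ then 0 else HahnSeries.single (uZ j) (c j) with hpay
    set vv : (Fin n → ℂ) → Fin n → K :=
      fun c => Matrix.vecMul (Matrix.vecMul (fun r => payload c (emb r)) A⁻¹) M with hvv
    have hvω : ∀ c, ∀ j ∈ ω, vv c j = payload c j := by
      intro c j hj
      obtain ⟨r, hr⟩ : ∃ r, emb r = j := by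
        have : j ∈ Set.range emb := by
          rw [hembd, Finset.range_orderEmbOfFin]
          exact hj
        exact this
      have hstep : ∀ w : Fin d → K, Matrix.vecMul w M (emb r) = Matrix.vecMul w A r := by
        intro w
        simp [Matrix.vecMul, dotProduct, hA, Matrix.submatrix_apply]
      rw [← hr]
      simp only [hvv]
      rw [hstep, Matrix.vecMul_vecMul, Matrix.nonsing_inv_mul A (isUnit_iff_ne_zero.mpr hAdet),
        Matrix.vecMul_one]
    have hvspanv : ∀ c, vv c ∈ Submodule.span K
        (Set.range fun i : Fin d => (M i : Fin n → K)) := by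
      intro c
      simp only [hvv]
      rw [vecMul_eq_sum_smul]
      exact Submodule.sum_mem _ (fun r _ =>
        Submodule.smul_mem _ _ (Submodule.subset_span ⟨r, rfl⟩))
    have hk₀ex : ∀ (i : Fin n) (hτ : (insert i ω).card = d + 1),
        ∃ k₀ : Fin (d + 1), (insert i ω).orderEmbOfFin hτ k₀ = i := by
      intro i hτ
      have : i ∈ Set.range ((insert i ω).orderEmbOfFin hτ) := by
        rw [Finset.range_orderEmbOfFin]
        exact Finset.mem_insert_self i ω
      exact this
    have hmemω : ∀ (i : Fin n) (hτ : (insert i ω).card = d + 1) (k₀ k : Fin (d + 1)),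
        (insert i ω).orderEmbOfFin hτ k₀ = i → k ≠ k₀ →
        (insert i ω).orderEmbOfFin hτ k ∈ ω := by
      intro i hτ k₀ k hk₀ hkne
      rcases Finset.mem_insert.mp ((insert i ω).orderEmbOfFin_mem hτ k) with h | h
      · exact absurd (((insert i ω).orderEmbOfFin hτ).injective (h.trans hk₀.symm)) hkne
      · exact h
    have hcirc : ∀ (c : Fin n → ℂ) (i : Fin n), i ∉ ω →
        ∀ (hτ : (insert i ω).card = d + 1) (k₀ : Fin (d + 1)),
        (insert i ω).orderEmbOfFin hτ k₀ = i →
        (-1 : K) ^ (d + (k₀ : ℕ)) * (vv c i * dsub M ω)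
          = - ∑ k ∈ Finset.univ.erase k₀, (-1 : K) ^ (d + (k : ℕ))
              * payload c ((insert i ω).orderEmbOfFin hτ k)
              * dsub M ((insert i ω).erase ((insert i ω).orderEmbOfFin hτ k)) := by
      intro c i hi hτ k₀ hk₀
      have hid := circuit_identity M (insert i ω) hτ
        (Matrix.vecMul (fun r => payload c (emb r)) A⁻¹)
      have hVM : Matrix.vecMul (Matrix.vecMul (fun r => payload c (emb r)) A⁻¹) M = vv c := by
        simp only [hvv]
      rw [hVM] at hid
      rw [← Finset.add_sum_erase _ _ (Finset.mem_univ k₀)] at hid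
      have hrepl : ∀ k ∈ Finset.univ.erase k₀,
          (-1 : K) ^ (d + (k : ℕ)) * vv c ((insert i ω).orderEmbOfFin hτ k)
            * dsub M ((insert i ω).erase ((insert i ω).orderEmbOfFin hτ k))
          = (-1 : K) ^ (d + (k : ℕ)) * payload c ((insert i ω).orderEmbOfFin hτ k)
            * dsub M ((insert i ω).erase ((insert i ω).orderEmbOfFin hτ k)) := by
        intro k hk
        rw [hvω c _ (hmemω i hτ k₀ k hk₀ (Finset.ne_of_mem_erase hk))]
      rw [Finset.sum_congr rfl hrepl] at hid
      rw [hk₀, Finset.erase_insert hi] at hid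
      rw [← mul_assoc]
      exact eq_neg_of_add_eq_zero_left hid
    -- vanishing of coordinates with u i = ⊤ outside ω
    have hvF : ∀ c i, i ∉ ω → i ∈ F → vv c i = 0 := by
      intro c i hi hiF
      have hτ : (insert i ω).card = d + 1 := by
        rw [Finset.card_insert_of_notMem hi, hcard]
      obtain ⟨k₀, hk₀⟩ := hk₀ex i hτ
      have hid := hcirc c i hi hτ k₀ hk₀
      have hz : ∀ k ∈ Finset.univ.erase k₀,
          (-1 : K) ^ (d + (k : ℕ)) * payload c ((insert i ω).orderEmbOfFin hτ k)
            * dsub M ((insert i ω).erase ((insert i ω).orderEmbOfFin hτ k)) = 0 := by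
        intro k hk
        have hjω : (insert i ω).orderEmbOfFin hτ k ∈ ω :=
          hmemω i hτ k₀ k hk₀ (Finset.ne_of_mem_erase hk)
        set j := (insert i ω).orderEmbOfFin hτ k with hjd
        by_cases hjF : j ∈ F
        · have : payload c j = 0 := by
            simp only [hpay, if_pos ((hmemF j).mp hjF)]
          rw [this, mul_zero, zero_mul]
        · have hdz : dsub M ((insert i ω).erase j) = 0 := by
            by_contra hdz
            have hij : i ≠ j := fun h => hi (h ▸ hjω)
            have hjτ : j ∈ insert i ω := Finset.mem_insert_of_mem hjω
            have hω'c : ((insert i ω).erase j).card = d := by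
              rw [Finset.card_erase_of_mem hjτ, Finset.card_insert_of_notMem hi, hcard]
              omega
            have hω'B : (insert i ω).erase j ∈ B := (hmemB _).mpr ⟨hω'c, hdz⟩
            have hjωF : j ∉ ω ∩ F := fun h => hjF (Finset.mem_of_mem_inter_right h)
            have hiωF : i ∉ ω ∩ F := fun h => hi (Finset.mem_of_mem_inter_left h)
            have hω'F : ((insert i ω).erase j) ∩ F = insert i (ω ∩ F) := by
              rw [Finset.erase_insert_of_ne hij, Finset.insert_inter_of_mem hiF,
                Finset.erase_inter, Finset.erase_eq_of_notMem hjωF]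
            have hcount := hFmax _ hω'B
            rw [hω'F, Finset.card_insert_of_notMem hiωF] at hcount
            omega
          rw [hdz, mul_zero]
      rw [Finset.sum_eq_zero hz, neg_zero] at hid
      rcases mul_eq_zero.mp hid with h | h
      · exact absurd h (pow_ne_zero _ (neg_ne_zero.mpr one_ne_zero))
      · rcases mul_eq_zero.mp h with h' | h'
        · exact h'
        · exact absurd h' hdet
    -- lower bound for the generic coordinates
    have hlowv : ∀ c i, i ∉ ω → i ∉ F →
        (((P + uZ i : ℤ)) : WithTop ℤ) ≤ zval (vv c i * dsub M ω) := by
      intro c i hi hiF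
      have hτ : (insert i ω).card = d + 1 := by
        rw [Finset.card_insert_of_notMem hi, hcard]
      obtain ⟨k₀, hk₀⟩ := hk₀ex i hτ
      have hid := hcirc c i hi hτ k₀ hk₀
      have hbound : ∀ k ∈ Finset.univ.erase k₀,
          (((P + uZ i : ℤ)) : WithTop ℤ) ≤ zval ((-1 : K) ^ (d + (k : ℕ))
            * payload c ((insert i ω).orderEmbOfFin hτ k)
            * dsub M ((insert i ω).erase ((insert i ω).orderEmbOfFin hτ k))) := by
        intro k hk
        have hjω : (insert i ω).orderEmbOfFin hτ k ∈ ω :=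
          hmemω i hτ k₀ k hk₀ (Finset.ne_of_mem_erase hk)
        set j := (insert i ω).orderEmbOfFin hτ k with hjd
        rw [mul_assoc, zval_neg_one_pow_mul, zval_mul]
        by_cases hjF : j ∈ F
        · have : payload c j = 0 := by
            simp only [hpay, if_pos ((hmemF j).mp hjF)]
          rw [this, zval_eq_top_iff.mpr rfl, top_add]
          exact le_top
        · by_cases hcj : c j = 0
          · have : payload c j = 0 := by
              simp only [hpay, if_neg (fun h => hjF ((hmemF j).mpr h)), hcj]
              exact HahnSeries.single_eq_zero
            rw [this, zval_eq_top_iff.mpr rfl, top_add]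
            exact le_top
          · have hpj : payload c j = HahnSeries.single (uZ j) (c j) := by
              simp only [hpay, if_neg (fun h => hjF ((hmemF j).mpr h))]
            rw [hpj, zval_single _ _ hcj]
            have hk2 := hkey i hi hiF j hjω
            rw [pval_eq_zval_dsub, huNF j hjF] at hk2
            cases hzd : zval (dsub M ((insert i ω).erase j)) with
            | top => rw [add_top]; exact le_top
            | coe q =>
                rw [hzd, ← WithTop.coe_add, WithTop.coe_le_coe] at hk2
                rw [← WithTop.coe_add, WithTop.coe_le_coe]
                omega
      have hlhs : zval (vv c i * dsub M ω)
          = zval ((-1 : K) ^ (d + (k₀ : ℕ)) * (vv c i * dsub M ω)) :=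
        (zval_neg_one_pow_mul _ _).symm
      rw [hlhs, hid, zval_neg]
      exact le_zval_sum _ _ hbound
    -- the linear forms
    have hform : ∀ i : Fin n, ∃ ℓ : (Fin n → ℂ) →ₗ[ℂ] ℂ, ℓ ≠ 0 ∧
        (i ∉ ω → i ∉ F → ∀ c, (vv c i * dsub M ω).coeff (P + uZ i) = ℓ c) := by
      intro i
      by_cases hcase : i ∉ ω ∧ i ∉ F
      case neg =>
        refine ⟨LinearMap.proj i, ?_, fun h1 h2 => absurd ⟨h1, h2⟩ hcase⟩
        intro h0
        have := congrFun (congrArg DFunLike.coe h0) (Pi.single i 1)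
        simp at this
      obtain ⟨hi, hiF⟩ := hcase
      have hτ : (insert i ω).card = d + 1 := by
        rw [Finset.card_insert_of_notMem hi, hcard]
      obtain ⟨k₀, hk₀⟩ := hk₀ex i hτ
      set e := (insert i ω).orderEmbOfFin hτ with hed
      set coef : Fin (d + 1) → ℂ := fun k => if u (e k) = ⊤ then 0
        else (-1 : ℂ) ^ (d + (k : ℕ))
          * (dsub M ((insert i ω).erase (e k))).coeff (P + uZ i - uZ (e k)) with hcoef
      set ℓ : (Fin n → ℂ) →ₗ[ℂ] ℂ := ((-1 : ℂ) ^ (d + (k₀ : ℕ) + 1)) •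
        ∑ k ∈ Finset.univ.erase k₀, coef k • (LinearMap.proj (e k) :
          (Fin n → ℂ) →ₗ[ℂ] ℂ) with hld
      have hval : ∀ c, (vv c i * dsub M ω).coeff (P + uZ i) = ℓ c := by
        intro c
        have hid := hcirc c i hi hτ k₀ hk₀
        have h3 : ∀ k ∈ Finset.univ.erase k₀,
            ((-1 : K) ^ (d + (k : ℕ)) * payload c (e k)
              * dsub M ((insert i ω).erase (e k))).coeff (P + uZ i)
            = coef k * c (e k) := by
          intro k hk
          rw [mul_assoc, coeff_neg_one_pow_mul]
          by_cases hjF' : u (e k) = ⊤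
          · have : payload c (e k) = 0 := by simp only [hpay, if_pos hjF']
            rw [this, zero_mul]
            simp only [hcoef, if_pos hjF']
            simp
          · have hpj : payload c (e k) = HahnSeries.single (uZ (e k)) (c (e k)) := by
              simp only [hpay, if_neg hjF']
            rw [hpj]
            have harith : (P + uZ i) = (P + uZ i - uZ (e k)) + uZ (e k) := by ring
            rw [harith, HahnSeries.coeff_single_mul_add]
            simp only [hcoef, if_neg hjF']
            ring
        have h4 : (-1 : ℂ) ^ (d + (k₀ : ℕ)) * ((vv c i * dsub M ω).coeff (P + uZ i))
            = - ∑ k ∈ Finset.univ.erase k₀, coef k * c (e k) := by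
          rw [← coeff_neg_one_pow_mul, hid, HahnSeries.coeff_neg, coeff_sum,
            Finset.sum_congr rfl h3]
        have hsq : (-1 : ℂ) ^ (d + (k₀ : ℕ)) * (-1 : ℂ) ^ (d + (k₀ : ℕ)) = 1 := by
          rw [← pow_add]
          exact Even.neg_one_pow ⟨d + (k₀ : ℕ), by ring⟩
        have h5 : (vv c i * dsub M ω).coeff (P + uZ i)
            = (-1 : ℂ) ^ (d + (k₀ : ℕ) + 1) * ∑ k ∈ Finset.univ.erase k₀,
                coef k * c (e k) := by
          have h6 := congrArg (fun t => (-1 : ℂ) ^ (d + (k₀ : ℕ)) * t) h4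
          rw [← mul_assoc, hsq, one_mul] at h6
          rw [h6, pow_succ]
          ring
        have hℓc : ℓ c = (-1 : ℂ) ^ (d + (k₀ : ℕ) + 1) * ∑ k ∈ Finset.univ.erase k₀,
            coef k * c (e k) := by
          simp only [hld, LinearMap.smul_apply, LinearMap.coe_sum, Finset.sum_apply,
            LinearMap.proj_apply, smul_eq_mul]
        rw [h5, hℓc]
      -- nonvanishing of the form, via the min-attained-twice hypothesis
      have hτe : (insert i ω).erase i = ω := Finset.erase_insert hi
      obtain ⟨a, haτ, b, hbτ, hab, heq, hmin⟩ := h1 (insert i ω) hτ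
      simp only [] at heq hmin
      have hfi : pval M ((insert i ω).erase i) + u i = ((P + uZ i : ℤ) : WithTop ℤ) := by
        rw [hτe, hpω, huNF i hiF, ← WithTop.coe_add]
      have hj₁ : ∃ j₁ ∈ insert i ω, j₁ ≠ i ∧
          pval M ((insert i ω).erase j₁) + u j₁ = ((P + uZ i : ℤ) : WithTop ℤ) := by
        rcases eq_or_ne a i with ha | ha
        · refine ⟨b, hbτ, ?_, ?_⟩
          · intro hbi
            exact hab (ha.trans hbi.symm)
          · rw [← heq, ha, hfi]
        · have haω : a ∈ ω := by
            rcases Finset.mem_insert.mp haτ with h | h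
            · exact absurd h ha
            · exact h
          refine ⟨a, haτ, ha, le_antisymm ?_ ?_⟩
          · have := hmin i (Finset.mem_insert_self i ω)
            rwa [hfi] at this
          · exact hkey i hi hiF a haω
      obtain ⟨j₁, hj₁τ, hj₁i, hj₁val⟩ := hj₁
      have hj₁ω : j₁ ∈ ω := by
        rcases Finset.mem_insert.mp hj₁τ with h | h
        · exact absurd h hj₁i
        · exact h
      have hj₁F : j₁ ∉ F := by
        intro h
        rw [(hmemF j₁).mp h, add_top] at hj₁val
        exact (WithTop.coe_ne_top (a := (P + uZ i : ℤ))) hj₁val.symm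
      have hD1 : dsub M ((insert i ω).erase j₁) ≠ 0 := by
        intro h
        rw [pval_eq_zval_dsub, h, zval_eq_top_iff.mpr rfl, top_add] at hj₁val
        exact (WithTop.coe_ne_top (a := (P + uZ i : ℤ))) hj₁val.symm
      have hord : (dsub M ((insert i ω).erase j₁)).order = P + uZ i - uZ j₁ := by
        rw [pval_eq_zval_dsub, zval_of_ne hD1, huNF j₁ hj₁F, ← WithTop.coe_add] at hj₁val
        have := WithTop.coe_inj.mp hj₁val
        omega
      obtain ⟨k₁, hk₁⟩ : ∃ k₁, e k₁ = j₁ := by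
        have : j₁ ∈ Set.range e := by
          rw [hed, Finset.range_orderEmbOfFin]
          exact hj₁τ
        exact this
      have hk₁ne : k₁ ≠ k₀ := fun h => hj₁i (by rw [← hk₁, h, hk₀])
      have hcoef1 : coef k₁ ≠ 0 := by
        simp only [hcoef, hk₁]
        rw [if_neg (fun h => hj₁F ((hmemF j₁).mpr h))]
        apply mul_ne_zero (pow_ne_zero _ (neg_ne_zero.mpr one_ne_zero))
        rw [← hord]
        exact HahnSeries.coeff_order_eq_zero.not.mpr hD1
      have hℓ0 : ℓ ≠ 0 := by
        intro h0
        have hev : ℓ (Pi.single (e k₁) 1) = (-1 : ℂ) ^ (d + (k₀ : ℕ) + 1) * coef k₁ := by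
          simp only [hld, LinearMap.smul_apply, LinearMap.coe_sum, Finset.sum_apply,
            LinearMap.proj_apply, smul_eq_mul]
          congr 1
          rw [Finset.sum_eq_single_of_mem k₁
            (Finset.mem_erase.mpr ⟨hk₁ne, Finset.mem_univ _⟩)]
          · simp
          · intro k _ hkne
            have : e k ≠ e k₁ := fun h => hkne (e.injective h)
            simp [Pi.single_eq_of_ne this]
        rw [h0] at hev
        simp only [LinearMap.zero_apply] at hev
        exact (mul_ne_zero (pow_ne_zero _ (neg_ne_zero.mpr one_ne_zero)) hcoef1) hev.symm
      exact ⟨ℓ, hℓ0, fun _ _ c => hval c⟩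
    choose ℓf hℓ0 hℓval using hform
    set I : Finset (Fin n) := Finset.univ.filter (fun i => i ∉ ω ∧ i ∉ F) with hI
    set L : Finset ((Fin n → ℂ) →ₗ[ℂ] ℂ) :=
      I.image ℓf ∪ (ω \ F).image (fun j => LinearMap.proj j) with hL
    have hLne : ∀ ℓ ∈ L, ℓ ≠ 0 := by
      intro ℓ hℓ
      rcases Finset.mem_union.mp hℓ with h | h
      · obtain ⟨i, _, rfl⟩ := Finset.mem_image.mp h
        exact hℓ0 i
      · obtain ⟨j, _, rfl⟩ := Finset.mem_image.mp h
        intro h0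
        have := congrFun (congrArg DFunLike.coe h0) (Pi.single j 1)
        simp at this
    obtain ⟨c, hc⟩ := exists_generic_point L hLne
    have hcj : ∀ j ∈ ω, j ∉ F → c j ≠ 0 := by
      intro j hj hjF
      have hmem : (LinearMap.proj j : (Fin n → ℂ) →ₗ[ℂ] ℂ) ∈ L :=
        Finset.mem_union_right _ (Finset.mem_image_of_mem _
          (Finset.mem_sdiff.mpr ⟨hj, hjF⟩))
      have := hc _ hmem
      simpa using this
    have hval : ∀ i, zval (vv c i) = u i := by
      intro i
      by_cases hiω : i ∈ ω
      · rw [hvω c i hiω]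
        by_cases hiF : u i = ⊤
        · simp only [hpay, if_pos hiF]
          rw [hiF]
          exact zval_eq_top_iff.mpr rfl
        · simp only [hpay, if_neg hiF]
          rw [zval_single _ _ (hcj i hiω (fun h => hiF ((hmemF i).mp h))),
            huNF i (fun h => hiF ((hmemF i).mp h))]
      · by_cases hiF : i ∈ F
        · rw [hvF c i hiω hiF, (hmemF i).mp hiF]
          exact zval_eq_top_iff.mpr rfl
        · have hiI : i ∈ I := by
            rw [hI]
            simp only [Finset.mem_filter, Finset.mem_univ, true_and]
            exact ⟨hiω, hiF⟩
          have hℓL : ℓf i ∈ L := Finset.mem_union_left _ (Finset.mem_image_of_mem _ hiI)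
          have hcoeff : (vv c i * dsub M ω).coeff (P + uZ i) ≠ 0 := by
            rw [hℓval i hiω hiF c]
            exact hc _ hℓL
          have hzz : zval (vv c i * dsub M ω) = ((P + uZ i : ℤ) : WithTop ℤ) :=
            zval_eq_of_coeff_ne_zero (hlowv c i hiω hiF) hcoeff
          rw [zval_mul, zval_of_ne hdet] at hzz
          have hfin : zval (vv c i) ≠ ⊤ := by
            intro hv
            rw [hv, top_add] at hzz
            exact WithTop.top_ne_coe hzz
          obtain ⟨q, hv⟩ := WithTop.ne_top_iff_exists.mp hfin
          rw [← hv, ← WithTop.coe_add] at hzz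
          have hq := WithTop.coe_inj.mp hzz
          rw [← hv, huNF i hiF]
          exact WithTop.coe_inj.mpr (by omega)
    have hne : vv c ≠ 0 := by
      obtain ⟨j, hjω, hjF⟩ := hωS
      intro h0
      have h1 := hval j
      rw [h0] at h1
      simp only [Pi.zero_apply] at h1
      have : u j = ⊤ := by rw [← h1]; exact zval_eq_top_iff.mpr rfl
      exact hjF ((hmemF j).mpr this)
    exact ⟨vv c, hne, hvspanv c, hval⟩
  · -- easy direction
    rintro ⟨v, hv0, hvspan, hvval⟩
    intro τ hτc
    by_cases hd : d = 0
    · exfalso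
      subst hd
      have hr : Set.range (fun i : Fin 0 => (M i : Fin n → K)) = ∅ := Set.range_eq_empty _
      rw [hr, Submodule.span_empty, Submodule.mem_bot] at hvspan
      exact hv0 hvspan
    obtain ⟨y, hy⟩ := (Submodule.mem_span_range_iff_exists_fun K).mp hvspan
    have hyv : Matrix.vecMul y M = v := by rw [vecMul_eq_sum_smul, hy]
    have hcirc := circuit_identity M τ hτc y
    rw [hyv] at hcirc
    set e := τ.orderEmbOfFin hτc with he
    have hmt := minTwice_of_sum_eq_zero Finset.univ
      (by rw [Finset.card_univ, Fintype.card_fin]; omega) _ hcirc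
    obtain ⟨a, -, b, -, hab, heq, hmin⟩ := hmt
    have hzx : ∀ k : Fin (d + 1),
        zval ((-1 : K) ^ (d + (k : ℕ)) * v (e k) * dsub M (τ.erase (e k)))
        = pval M (τ.erase (e k)) + u (e k) := by
      intro k
      rw [mul_assoc, zval_neg_one_pow_mul, zval_mul, hvval, pval_eq_zval_dsub, add_comm]
    refine ⟨e a, τ.orderEmbOfFin_mem hτc a, e b, τ.orderEmbOfFin_mem hτc b,
      fun h => hab (e.injective h), ?_, ?_⟩
    · show pval M (τ.erase (e a)) + u (e a) = pval M (τ.erase (e b)) + u (e b)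
      rw [← hzx a, ← hzx b]
      exact heq
    · intro l hl
      obtain ⟨k, hk⟩ : ∃ k, e k = l := by
        have : l ∈ Set.range e := by
          rw [he, Finset.range_orderEmbOfFin]
          exact hl
        exact this
      show pval M (τ.erase (e a)) + u (e a) ≤ pval M (τ.erase l) + u l
      rw [← hk, ← hzx a, ← hzx k]
      exact hmin k (Finset.mem_univ k)
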